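/- Let G be a simple graph, v a vertex, and r ≥ 1 an integer, and assume that for every vertex c with c ≠ v and ¬G.Adj c v one has g_v(G) ≥ dist_G(c,v) + 1. Then for every length-r valid sequence (s_1,…,s_r) for v with graph sequence G_1 = G, G_{i+1} = G_i + (s_i,v), the local girth of v in the final graph satisfies g_v(G_{r+1}) = min_{1 ≤ i ≤ r} ( dist_{G_i}(s_i,v) + 1 ), and consequently g_v^{(r)}(G) = sup over all length-r valid sequences of min_{1 ≤ i ≤ r} ( dist_{G_i}(s_i,v) + 1 ). -/

import Mathlib

open SimpleGraph

variable {V : Type*}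

/-- `G + (c,v)`: the graph obtained from `G` by adding the edge `{c, v}`. -/
def addEdge (G : SimpleGraph V) (c v : V) : SimpleGraph V :=
  G ⊔ SimpleGraph.fromEdgeSet {s(c, v)}

/-- The local girth of a vertex `v`: the infimum (in `ℕ∞`) of the lengths of
cycles of `G` passing through `v`. -/
noncomputable def localGirth (G : SimpleGraph V) (v : V) : ℕ∞ :=
  ⨅ (a : V) (w : G.Walk a a) (_ : w.IsCycle) (_ : v ∈ w.support), (w.length : ℕ∞)

/-- The edge local girth of `e`: the infimum (in `ℕ∞`) of the lengths of
cycles of `G` containing the edge `e`. -/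
noncomputable def edgeLocalGirth (G : SimpleGraph V) (e : Sym2 V) : ℕ∞ :=
  ⨅ (a : V) (w : G.Walk a a) (_ : w.IsCycle) (_ : e ∈ w.edges), (w.length : ℕ∞)

/-- A length-`r` valid sequence for `v` in `G`: pairwise distinct vertices,
each distinct from `v` and not adjacent to `v` in `G`. -/
def ValidSeq (G : SimpleGraph V) (v : V) {r : ℕ} (s : Fin r → V) : Prop :=
  Function.Injective s ∧ ∀ i, s i ≠ v ∧ ¬ G.Adj (s i) v

/-- The graph sequence of a sequence `s`: `graphSeq G v s 0 = G₁ = G` and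
`graphSeq G v s i = G_{i+1} = G_i + (s_i, v)`. -/
def graphSeq (G : SimpleGraph V) (v : V) {r : ℕ} (s : Fin r → V) : ℕ → SimpleGraph V
  | 0 => G
  | i + 1 => if h : i < r then addEdge (graphSeq G v s i) (s ⟨i, h⟩) v else graphSeq G v s i

/-- The `r`-edge local girth of `v` in `G`: the supremum, over all length-`r`
valid sequences `s` for `v`, of the local girth of `v` in the final graph. -/
noncomputable def multiEdgeLocalGirth (G : SimpleGraph V) (v : V) (r : ℕ) : ℕ∞ :=
  ⨆ (s : Fin r → V) (_ : ValidSeq G v s), localGirth (graphSeq G v s r) v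

/-- The `r`-edge local girth of `c` with respect to `v`:
`g_v(G+(c,v))` if `r = 1`, and `g_v^{(r-1)}(G+(c,v))` if `r ≥ 2`. -/
noncomputable def cnMultiEdgeLocalGirth (G : SimpleGraph V) (c v : V) (r : ℕ) : ℕ∞ :=
  if r = 1 then localGirth (addEdge G c v) v
  else multiEdgeLocalGirth (addEdge G c v) v (r - 1)

section lemmas
variable {G H : SimpleGraph V} {c v : V}

lemma addEdge_le (G : SimpleGraph V) (c v : V) : G ≤ addEdge G c v := le_sup_left

lemma addEdge_adj_iff {a b : V} :
    (addEdge G c v).Adj a b ↔ G.Adj a b ∨ (s(a, b) = s(c, v) ∧ a ≠ b) := by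
  simp [addEdge, fromEdgeSet_adj]

lemma edgeSet_addEdge (hcv : c ≠ v) :
    (addEdge G c v).edgeSet = G.edgeSet ∪ {s(c, v)} := by
  rw [addEdge, edgeSet_sup, edgeSet_fromEdgeSet]
  congr 1
  ext e
  simp only [Set.mem_diff, Set.mem_singleton_iff, Set.mem_setOf_eq, and_iff_left_iff_imp]
  rintro rfl
  simp [Sym2.isDiag_iff_proj_eq, hcv]

lemma localGirth_le {a : V} {w : G.Walk a a} (hw : w.IsCycle) (hv : v ∈ w.support) :
    localGirth G v ≤ w.length :=
  iInf_le_of_le a <| iInf_le_of_le w <| iInf_le_of_le hw <| iInf_le _ hv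

lemma localGirth_anti (h : G ≤ H) : localGirth H v ≤ localGirth G v := by
  refine le_iInf fun a => le_iInf fun w => le_iInf fun hw => le_iInf fun hv => ?_
  have hsub : ∀ e ∈ w.edges, e ∈ H.edgeSet := fun e he =>
    edgeSet_mono h (w.edges_subset_edgeSet he)
  have := localGirth_le (G := H) (v := v) (hw.transfer hsub)
    (by rw [Walk.support_transfer]; exact hv)
  rwa [Walk.length_transfer] at this

lemma length_rotate [DecidableEq V] {u a : V} (w : G.Walk a a) (h : u ∈ w.support) :
    (w.rotate u h).length = w.length := by
  have := congrArg Walk.length (w.take_spec h)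
  rw [Walk.length_append] at this
  rw [show w.rotate u h = (w.dropUntil u h).append (w.takeUntil u h) from rfl,
    Walk.length_append]
  omega

lemma localGirth_addEdge (hcv : c ≠ v) (hadj : ¬ G.Adj c v) :
    localGirth (addEdge G c v) v = min (localGirth G v) (G.edist c v + 1) := by
  have hvc : (addEdge G c v).Adj v c := by
    rw [addEdge_adj_iff]
    exact Or.inr ⟨Sym2.eq_swap, Ne.symm hcv⟩
  have hes : s(c, v) ∉ G.edgeSet := hadj
  classical
  refine le_antisymm (le_min (localGirth_anti (addEdge_le G c v)) ?_) ?_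
  · -- ≤ edist + 1
    rcases eq_or_ne (G.edist c v) ⊤ with htop | htop
    · simp [htop]
    obtain ⟨p, hp⟩ := (reachable_of_edist_ne_top htop).exists_walk_length_eq_edist
    set q : G.Walk c v := p.bypass with hqdef
    have hqpath : q.IsPath := p.bypass_isPath
    have hqlen : (q.length : ℕ∞) = G.edist c v := by
      refine le_antisymm ?_ (q.edist_le)
      rw [← hp]
      exact_mod_cast Nat.cast_le.mpr (Walk.length_bypass_le p)
    have hqG : ∀ e ∈ q.edges, e ∈ (addEdge G c v).edgeSet := fun e he =>
      edgeSet_mono (addEdge_le G c v) (q.edges_subset_edgeSet he)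
    set q' := q.transfer (addEdge G c v) hqG with hq'
    have hq'path : q'.IsPath := hqpath.transfer hqG
    have hq'edges : s(v, c) ∉ q'.edges := by
      rw [hq', Walk.edges_transfer]
      intro hmem
      exact hes (Sym2.eq_swap ▸ q.edges_subset_edgeSet hmem)
    have hcyc : (Walk.cons hvc q').IsCycle := by
      rw [Walk.cons_isCycle_iff]
      exact ⟨hq'path, hq'edges⟩
    have hle := localGirth_le hcyc (Walk.start_mem_support _)
    refine hle.trans ?_
    rw [Walk.length_cons]
    push_cast
    rw [Walk.length_transfer, hqlen]
  · -- min ≤ localGirth (addEdge)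
    refine le_iInf fun a => le_iInf fun w => le_iInf fun hw => le_iInf fun hv => ?_
    by_cases he : s(c, v) ∈ w.edges
    · -- through new edge
      refine min_le_of_right_le ?_
      set q := w.rotate v hv with hqdef
      have hqcyc : q.IsCycle := hw.rotate hv
      have hqe : s(c, v) ∈ q.edges := (w.rotate_edges v hv).mem_iff.mpr he
      have hqlen : q.length = w.length := length_rotate w hv
      have hc : c ∈ q.support := q.fst_mem_support_of_mem_edges hqe
      set w1 := q.takeUntil c hc
      set w2 := q.dropUntil c hc
      have hspec : w1.append w2 = q := q.take_spec hc
      have hlen : w1.length + w2.length = q.length := by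
        have := congrArg Walk.length hspec
        rwa [Walk.length_append] at this
      have hedges : q.edges = w1.edges ++ w2.edges := by
        conv_lhs => rw [← hspec]
        exact Walk.edges_append _ _
      have hnodup : (w1.edges ++ w2.edges).Nodup := hedges ▸ hqcyc.edges_nodup
      have hmem : s(c, v) ∈ w1.edges ++ w2.edges := hedges ▸ hqe
      rcases List.mem_append.mp hmem with h1 | h2
      · -- edge in w1 : Walk v c ; use w2 : Walk c v
        have h2 : s(c, v) ∉ w2.edges := fun hx =>
          (List.disjoint_of_nodup_append hnodup) h1 hx
        have hw2G : ∀ e ∈ w2.edges, e ∈ G.edgeSet := by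
          intro e heq
          have := w2.edges_subset_edgeSet heq
          rw [edgeSet_addEdge hcv] at this
          rcases this with h | h
          · exact h
          · exact absurd (h ▸ heq) h2
        have hd : G.edist c v ≤ (w2.transfer G hw2G).length := Walk.edist_le _
        rw [Walk.length_transfer] at hd
        have h1pos : 1 ≤ w1.length := by
          rcases Nat.eq_zero_or_pos w1.length with h0 | h0
          · exfalso
            have : w1.edges = [] := List.length_eq_zero_iff.mp (by rw [Walk.length_edges, h0])
            simp [this] at h1
          · exact h0
        calc G.edist c v + 1 ≤ (w2.length : ℕ∞) + w1.length := by
              exact add_le_add hd (by exact_mod_cast h1pos)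
          _ = (w.length : ℕ∞) := by
              rw [← Nat.cast_add]
              congr 1
              omega
      · -- edge in w2 ; use w1 : Walk v c
        have h1 : s(c, v) ∉ w1.edges := fun hx =>
          (List.disjoint_of_nodup_append hnodup) hx h2
        have hw1G : ∀ e ∈ w1.edges, e ∈ G.edgeSet := by
          intro e heq
          have := w1.edges_subset_edgeSet heq
          rw [edgeSet_addEdge hcv] at this
          rcases this with h | h
          · exact h
          · exact absurd (h ▸ heq) h1
        have hd : G.edist v c ≤ (w1.transfer G hw1G).length := Walk.edist_le _
        rw [Walk.length_transfer] at hd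
        rw [edist_comm] at hd
        have h2pos : 1 ≤ w2.length := by
          rcases Nat.eq_zero_or_pos w2.length with h0 | h0
          · exfalso
            have : w2.edges = [] := List.length_eq_zero_iff.mp (by rw [Walk.length_edges, h0])
            simp [this] at h2
          · exact h0
        calc G.edist c v + 1 ≤ (w1.length : ℕ∞) + w2.length := by
              exact add_le_add hd (by exact_mod_cast h2pos)
          _ = (w.length : ℕ∞) := by
              rw [← Nat.cast_add]
              congr 1
              omega
    · -- transfer to G
      refine min_le_of_left_le ?_
      have hsub : ∀ e ∈ w.edges, e ∈ G.edgeSet := by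
        intro e heq
        have := w.edges_subset_edgeSet heq
        rw [edgeSet_addEdge hcv] at this
        rcases this with h | h
        · exact h
        · exact absurd (h ▸ heq) he
      have := localGirth_le (G := G) (v := v) (hw.transfer hsub)
        (by rw [Walk.support_transfer]; exact hv)
      rwa [Walk.length_transfer] at this

end lemmas

section main
variable {G : SimpleGraph V} {v : V} {r : ℕ} {s : Fin r → V}

lemma graphSeq_adj {a b : V} : ∀ n, (graphSeq G v s n).Adj a b →
    G.Adj a b ∨ ∃ j : Fin r, j.1 < n ∧ s(a, b) = s(s j, v)
  | 0, h => Or.inl h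
  | n+1, h => by
    rw [graphSeq] at h
    split at h
    case isTrue hn =>
      rcases addEdge_adj_iff.mp h with h | ⟨he, _⟩
      · rcases graphSeq_adj n h with h | ⟨j, hj, hje⟩
        · exact Or.inl h
        · exact Or.inr ⟨j, Nat.lt_succ_of_lt hj, hje⟩
      · exact Or.inr ⟨⟨n, hn⟩, Nat.lt_succ_self n, he⟩
    case isFalse =>
      rcases graphSeq_adj n h with h | ⟨j, hj, hje⟩
      · exact Or.inl h
      · exact Or.inr ⟨j, Nat.lt_succ_of_lt hj, hje⟩

lemma not_graphSeq_adj (hs : ValidSeq G v s) {i : ℕ} (hi : i < r) {n : ℕ} (hn : n ≤ i) :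
    ¬ (graphSeq G v s n).Adj (s ⟨i, hi⟩) v := by
  intro h
  rcases graphSeq_adj n h with h | ⟨j, hj, hje⟩
  · exact (hs.2 ⟨i, hi⟩).2 h
  · rw [Sym2.eq_iff] at hje
    rcases hje with ⟨h1, -⟩ | ⟨h1, h2⟩
    · have hij : (⟨i, hi⟩ : Fin r) = j := hs.1 h1
      have : j.1 = i := by rw [← hij]
      omega
    · exact (hs.2 ⟨i, hi⟩).1 h1


theorem stmt_12 (G : SimpleGraph V) (v : V) {r : ℕ} (hr : 1 ≤ r)
    (hg : ∀ c : V, c ≠ v → ¬ G.Adj c v → G.edist c v + 1 ≤ localGirth G v) :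
    (∀ s : Fin r → V, ValidSeq G v s →
      localGirth (graphSeq G v s r) v =
        ⨅ i : Fin r, ((graphSeq G v s i.1).edist (s i) v + 1)) ∧
    multiEdgeLocalGirth G v r =
      ⨆ (s : Fin r → V) (_ : ValidSeq G v s),
        ⨅ i : Fin r, ((graphSeq G v s i.1).edist (s i) v + 1) := by
  have key : ∀ s : Fin r → V, ValidSeq G v s →
      localGirth (graphSeq G v s r) v =
        ⨅ i : Fin r, ((graphSeq G v s i.1).edist (s i) v + 1) := by
    intro s hs
    set term : ℕ → ℕ∞ :=
      fun i => if h : i < r then ((graphSeq G v s i).edist (s ⟨i, h⟩) v + 1) else ⊤ with hterm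
    have claim : ∀ n, n ≤ r → localGirth (graphSeq G v s n) v
        = min (localGirth G v) ((Finset.range n).inf term) := by
      intro n
      induction n with
      | zero => intro _; simp [graphSeq]
      | succ n ih =>
        intro hn1
        have hn : n < r := hn1
        have hstep : graphSeq G v s (n + 1) = addEdge (graphSeq G v s n) (s ⟨n, hn⟩) v := by
          rw [graphSeq, dif_pos hn]
        rw [hstep, localGirth_addEdge (hs.2 ⟨n, hn⟩).1 (not_graphSeq_adj hs hn le_rfl),
          ih (le_of_lt hn), Finset.range_add_one, Finset.inf_insert]
        have ht : term n = (graphSeq G v s n).edist (s ⟨n, hn⟩) v + 1 := dif_pos hn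
        rw [ht, min_assoc,
          min_comm ((Finset.range n).inf term) ((graphSeq G v s n).edist (s ⟨n, hn⟩) v + 1)]
    have habs : (Finset.range r).inf term ≤ localGirth G v := by
      have h0 : (0 : ℕ) ∈ Finset.range r := Finset.mem_range.mpr hr
      refine (Finset.inf_le h0).trans ?_
      have h0' : term 0 = G.edist (s ⟨0, hr⟩) v + 1 := dif_pos hr
      rw [h0']
      exact hg _ (hs.2 ⟨0, hr⟩).1 (hs.2 ⟨0, hr⟩).2
    have heq : (Finset.range r).inf term
        = ⨅ i : Fin r, ((graphSeq G v s i.1).edist (s i) v + 1) := by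
      apply le_antisymm
      · refine le_iInf fun i => (Finset.inf_le (Finset.mem_range.mpr i.2)).trans ?_
        have hi : term i.1 = (graphSeq G v s i.1).edist (s ⟨i.1, i.2⟩) v + 1 := dif_pos i.2
        exact le_of_eq hi
      · refine Finset.le_inf fun b hb => ?_
        have hb' := Finset.mem_range.mp hb
        have hb'' : term b = (graphSeq G v s b).edist (s ⟨b, hb'⟩) v + 1 := dif_pos hb'
        exact iInf_le_of_le ⟨b, hb'⟩ (le_of_eq hb''.symm)
    rw [claim r le_rfl, min_eq_right habs, heq]
  exact ⟨key, iSup_congr fun s => iSup_congr fun hs => key s hs⟩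


end main
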